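/- arXiv:2512.11784 — 2 statements merged into one kernel-verified Lean document; each statement's English description precedes it below -/
import Mathlib

section
/- Let $\mu = \mathcal{N}(m,\Gamma)$ be a Gaussian measure on $\mathbb{R}^d$ with mean $m$ and covariance $\Gamma$, and let $K,Q,V \in \mathbb{R}^{d\times d}$. Then for every $z \in \mathbb{R}^d$, the softmax attention output $T^{K,Q,V}[\mu](z) := \frac{\int \exp(\langle Qz, Kz'\rangle) V z' \, d\mu(z')}{\int \exp(\langle Qz, Kz'\rangle) \, d\mu(z')}$ equals $Vm + V\Gamma K^\top Q z$. -/
open MeasureTheory ProbabilityTheory Matrix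

/-- The standard Gaussian measure on `Fin d → ℝ`. -/
noncomputable def stdGaussian (d : ℕ) : Measure (Fin d → ℝ) :=
  Measure.pi fun _ => gaussianReal 0 1

/-- The Gaussian measure `N(m, A * Aᵀ)` on `ℝ^d`, realized as the pushforward of the
standard Gaussian by the affine map `x ↦ m + A x`. -/
noncomputable def gaussianVec {d : ℕ} (m : Fin d → ℝ) (A : Matrix (Fin d) (Fin d) ℝ) :
    Measure (Fin d → ℝ) :=
  (stdGaussian d).map (fun x => m + A.mulVec x)

/-- Softmax attention with prompt measure `μ`, query token `z`, and parameters `K, Q, V`: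
`T^{K,Q,V}[μ](z) = (∫ exp(⟨Qz, Kz'⟩) V z' dμ(z')) / (∫ exp(⟨Qz, Kz'⟩) dμ(z'))`. -/
noncomputable def attn {d : ℕ} (K Q V : Matrix (Fin d) (Fin d) ℝ)
    (μ : Measure (Fin d → ℝ)) (z : Fin d → ℝ) : Fin d → ℝ :=
  (∫ z', Real.exp ((Q.mulVec z) ⬝ᵥ (K.mulVec z')) ∂μ)⁻¹ •
    ∫ z', Real.exp ((Q.mulVec z) ⬝ᵥ (K.mulVec z')) • V.mulVec z' ∂μ

open Real
open scoped NNReal ENNReal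


lemma gaussian_tilt (c x : ℝ) :
    Real.exp (c*x) * gaussianPDFReal 0 1 x = Real.exp (c^2/2) * gaussianPDFReal c 1 x := by
  simp only [gaussianPDFReal, NNReal.coe_one, mul_one]
  have h : Real.exp (c*x) * Real.exp (-(x-0)^2/2) = Real.exp (c^2/2) * Real.exp (-(x-c)^2/2) := by
    rw [← Real.exp_add, ← Real.exp_add]; congr 1; ring
  linear_combination (Real.sqrt (2*π))⁻¹ * h

lemma integral_gaussianReal_eq (μ : ℝ) (f : ℝ → ℝ) :
    ∫ x, f x ∂(gaussianReal μ 1) = ∫ x, gaussianPDFReal μ 1 x * f x := by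
  rw [gaussianReal_of_var_ne_zero _ one_ne_zero]
  have h : (gaussianPDF μ 1) = fun x => ((Real.toNNReal (gaussianPDFReal μ 1 x) : ℝ≥0) : ℝ≥0∞) := by
    ext x; rw [gaussianPDF_def]; rfl
  rw [h, integral_withDensity_eq_integral_smul
    ((measurable_gaussianPDFReal μ 1).real_toNNReal)]
  refine integral_congr_ae (Filter.Eventually.of_forall fun x => ?_)
  simp [NNReal.smul_def, Real.coe_toNNReal _ (gaussianPDFReal_nonneg μ 1 x)]

lemma integrable_gaussianReal_iff (μ : ℝ) (f : ℝ → ℝ) :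
    Integrable f (gaussianReal μ 1) ↔ Integrable (fun x => gaussianPDFReal μ 1 x * f x) := by
  rw [gaussianReal_of_var_ne_zero _ one_ne_zero]
  have h : (gaussianPDF μ 1) = fun x => ((Real.toNNReal (gaussianPDFReal μ 1 x) : ℝ≥0) : ℝ≥0∞) := by
    ext x; rw [gaussianPDF_def]; rfl
  rw [h, integrable_withDensity_iff_integrable_smul
    ((measurable_gaussianPDFReal μ 1).real_toNNReal)]
  refine integrable_congr (Filter.Eventually.of_forall fun x => ?_)
  simp [NNReal.smul_def, Real.coe_toNNReal _ (gaussianPDFReal_nonneg μ 1 x)]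
lemma gaussianPDFReal_shift (μ x : ℝ) :
    gaussianPDFReal μ 1 x = gaussianPDFReal 0 1 (x - μ) := by
  simp [gaussianPDFReal]

lemma integrable_id_mul_gaussianPDFReal0 :
    Integrable (fun y : ℝ => y * gaussianPDFReal 0 1 y) := by
  have h := (integrable_mul_exp_neg_mul_sq (by norm_num : (0:ℝ) < 1/2)).const_mul
    (Real.sqrt (2*π))⁻¹
  refine h.congr (Filter.Eventually.of_forall fun y => ?_)
  simp only [gaussianPDFReal, NNReal.coe_one, mul_one, sub_zero]
  ring_nf

lemma integrable_id_mul_gaussianPDFReal (μ : ℝ) :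
    Integrable (fun x : ℝ => x * gaussianPDFReal μ 1 x) := by
  have h : Integrable (fun y : ℝ => (y + μ) * gaussianPDFReal 0 1 y) :=
    integrable_id_mul_gaussianPDFReal0.add ((integrable_gaussianPDFReal 0 1).const_mul μ)
      |>.congr (Filter.Eventually.of_forall fun y => by simp [Pi.add_apply]; ring)
  have := h.comp_sub_right μ
  refine this.congr (Filter.Eventually.of_forall fun x => ?_)
  simp [gaussianPDFReal_shift μ x]

lemma integral_id_mul_gaussianPDFReal0 :
    ∫ y : ℝ, y * gaussianPDFReal 0 1 y = 0 := by
  have h := integral_neg_eq_self (fun y : ℝ => y * gaussianPDFReal 0 1 y) volume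
  have h2 : ∀ y : ℝ, (-y) * gaussianPDFReal 0 1 (-y) = -(y * gaussianPDFReal 0 1 y) := by
    intro y; simp [gaussianPDFReal, neg_sq]
  simp only [h2] at h
  rw [integral_neg] at h
  linarith

lemma integral_id_mul_gaussianPDFReal (μ : ℝ) :
    ∫ x : ℝ, x * gaussianPDFReal μ 1 x = μ := by
  have h := integral_add_right_eq_self (μ := volume) (fun x : ℝ => x * gaussianPDFReal μ 1 x) μ
  rw [← h]
  have h2 : ∀ x : ℝ, (x + μ) * gaussianPDFReal μ 1 (x + μ)
      = x * gaussianPDFReal 0 1 x + μ * gaussianPDFReal 0 1 x := by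
    intro x; rw [gaussianPDFReal_shift μ, add_sub_cancel_right]; ring
  simp only [h2]
  rw [integral_add integrable_id_mul_gaussianPDFReal0
    ((integrable_gaussianPDFReal 0 1).const_mul μ),
    integral_id_mul_gaussianPDFReal0, integral_const_mul,
    integral_gaussianPDFReal_eq_one 0 one_ne_zero]
  ring

lemma integral_exp_gaussian (c : ℝ) :
    ∫ x, Real.exp (c*x) ∂(gaussianReal 0 1) = Real.exp (c^2/2) := by
  rw [integral_gaussianReal_eq]
  have h : ∀ x : ℝ, gaussianPDFReal 0 1 x * Real.exp (c*x)
      = Real.exp (c^2/2) * gaussianPDFReal c 1 x := fun x => by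
    rw [mul_comm]; exact gaussian_tilt c x
  simp only [h]
  rw [integral_const_mul, integral_gaussianPDFReal_eq_one c one_ne_zero, mul_one]

lemma integral_exp_mul_id_gaussian (c : ℝ) :
    ∫ x, Real.exp (c*x) * x ∂(gaussianReal 0 1) = c * Real.exp (c^2/2) := by
  rw [integral_gaussianReal_eq]
  have h : ∀ x : ℝ, gaussianPDFReal 0 1 x * (Real.exp (c*x) * x)
      = Real.exp (c^2/2) * (x * gaussianPDFReal c 1 x) := fun x => by
    linear_combination x * gaussian_tilt c x
  simp only [h]
  rw [integral_const_mul, integral_id_mul_gaussianPDFReal c]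
  ring

lemma integrable_exp_gaussian (c : ℝ) :
    Integrable (fun x => Real.exp (c*x)) (gaussianReal 0 1) := by
  rw [integrable_gaussianReal_iff]
  have h : ∀ x : ℝ, gaussianPDFReal 0 1 x * Real.exp (c*x)
      = Real.exp (c^2/2) * gaussianPDFReal c 1 x := fun x => by
    rw [mul_comm]; exact gaussian_tilt c x
  simp only [h]
  exact (integrable_gaussianPDFReal c 1).const_mul _

lemma integrable_exp_mul_id_gaussian (c : ℝ) :
    Integrable (fun x => Real.exp (c*x) * x) (gaussianReal 0 1) := by
  rw [integrable_gaussianReal_iff]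
  have h : ∀ x : ℝ, gaussianPDFReal 0 1 x * (Real.exp (c*x) * x)
      = Real.exp (c^2/2) * (x * gaussianPDFReal c 1 x) := fun x => by
    linear_combination x * gaussian_tilt c x
  simp only [h]
  exact ((integrable_id_mul_gaussianPDFReal c).const_mul _)



section Multi
variable {d : ℕ} (b : Fin d → ℝ)

lemma exp_dot_eq (x : Fin d → ℝ) : Real.exp (b ⬝ᵥ x) = ∏ i, Real.exp (b i * x i) := by
  rw [dotProduct, Real.exp_sum]

lemma integral_exp_dot :
    ∫ x, Real.exp (b ⬝ᵥ x) ∂stdGaussian d = ∏ i, Real.exp ((b i)^2/2) := by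
  letI : MeasureSpace ℝ := ⟨gaussianReal 0 1⟩
  haveI : SigmaFinite (volume : Measure ℝ) := inferInstanceAs (SigmaFinite (gaussianReal 0 1))
  have hvol : stdGaussian d = (volume : Measure (Fin d → ℝ)) := rfl
  rw [hvol]
  simp_rw [exp_dot_eq b]
  rw [show (volume : Measure (Fin d → ℝ)) = Measure.pi (fun _ => volume) from rfl,
    integral_fintype_prod_eq_prod (fun i t => Real.exp (b i * t))]
  exact Finset.prod_congr rfl fun i _ => integral_exp_gaussian (b i)

lemma integral_exp_dot_mul (i : Fin d) :
    ∫ x, Real.exp (b ⬝ᵥ x) * x i ∂stdGaussian d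
      = b i * ∏ j, Real.exp ((b j)^2/2) := by
  classical
  letI : MeasureSpace ℝ := ⟨gaussianReal 0 1⟩
  haveI : SigmaFinite (volume : Measure ℝ) := inferInstanceAs (SigmaFinite (gaussianReal 0 1))
  have hvol : stdGaussian d = (volume : Measure (Fin d → ℝ)) := rfl
  rw [hvol]
  have hpt : ∀ x : Fin d → ℝ, Real.exp (b ⬝ᵥ x) * x i
      = ∏ j, (fun j t => if j = i then Real.exp (b j * t) * t else Real.exp (b j * t)) j (x j) := by
    intro x
    rw [exp_dot_eq b]
    have : ∀ j : Fin d, (if j = i then Real.exp (b j * x j) * x j else Real.exp (b j * x j))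
        = Real.exp (b j * x j) * (if j = i then x j else 1) := by
      intro j; split <;> simp
    simp only [this, Finset.prod_mul_distrib]
    simp
  simp_rw [hpt]
  rw [show (volume : Measure (Fin d → ℝ)) = Measure.pi (fun _ => volume) from rfl,
    integral_fintype_prod_eq_prod
    (fun j t => if j = i then Real.exp (b j * t) * t else Real.exp (b j * t))]
  have hint : ∀ j : Fin d,
      (∫ t, if j = i then Real.exp (b j * t) * t else Real.exp (b j * t))
      = (if j = i then b i else 1) * Real.exp ((b j)^2/2) := by
    intro j
    split
    · next h =>
        subst h
        exact integral_exp_mul_id_gaussian (b j)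
    · rw [one_mul]
      exact integral_exp_gaussian (b j)
  simp_rw [hint, Finset.prod_mul_distrib, Finset.prod_ite_eq' Finset.univ i (fun _ => b i)]
  simp

lemma integrable_exp_dot :
    Integrable (fun x => Real.exp (b ⬝ᵥ x)) (stdGaussian d) := by
  letI : MeasureSpace ℝ := ⟨gaussianReal 0 1⟩
  haveI : SigmaFinite (volume : Measure ℝ) := inferInstanceAs (SigmaFinite (gaussianReal 0 1))
  have hvol : stdGaussian d = (volume : Measure (Fin d → ℝ)) := rfl
  rw [hvol]
  simp_rw [exp_dot_eq b]
  exact Integrable.fintype_prod (f := fun i t => Real.exp (b i * t))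
    (fun i => integrable_exp_gaussian (b i))

lemma integrable_exp_dot_mul (i : Fin d) :
    Integrable (fun x => Real.exp (b ⬝ᵥ x) * x i) (stdGaussian d) := by
  classical
  letI : MeasureSpace ℝ := ⟨gaussianReal 0 1⟩
  haveI : SigmaFinite (volume : Measure ℝ) := inferInstanceAs (SigmaFinite (gaussianReal 0 1))
  have hvol : stdGaussian d = (volume : Measure (Fin d → ℝ)) := rfl
  rw [hvol]
  have hpt : ∀ x : Fin d → ℝ, Real.exp (b ⬝ᵥ x) * x i
      = ∏ j, (fun j t => if j = i then Real.exp (b j * t) * t else Real.exp (b j * t)) j (x j) := by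
    intro x
    rw [exp_dot_eq b]
    have : ∀ j : Fin d, (if j = i then Real.exp (b j * x j) * x j else Real.exp (b j * x j))
        = Real.exp (b j * x j) * (if j = i then x j else 1) := by
      intro j; split <;> simp
    simp only [this, Finset.prod_mul_distrib]
    simp
  simp_rw [hpt]
  refine Integrable.fintype_prod
    (f := fun j t => if j = i then Real.exp (b j * t) * t else Real.exp (b j * t)) (fun j => ?_)
  dsimp only
  split
  · exact integrable_exp_mul_id_gaussian _
  · exact integrable_exp_gaussian _

end Multi

lemma continuous_mulVec {d : ℕ} (M : Matrix (Fin d) (Fin d) ℝ) :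
    Continuous fun v : Fin d → ℝ => M.mulVec v :=
  M.mulVecLin.continuous_of_finiteDimensional

lemma continuous_dotProduct {d : ℕ} (w : Fin d → ℝ) :
    Continuous fun v : Fin d → ℝ => w ⬝ᵥ v := by
  simp only [dotProduct]
  exact continuous_finset_sum _ fun i _ => continuous_const.mul (continuous_apply i)


set_option maxHeartbeats 2000000 in
/-- For a Gaussian prompt measure `μ = N(m, Γ)`, the softmax attention output equals
`V m + V Γ Kᵀ Q z` for every query `z`. -/
theorem attention_gaussian_is_affine {d : ℕ} (m : Fin d → ℝ)
    (A K Q V Γ : Matrix (Fin d) (Fin d) ℝ) (hΓ : Γ = A * Aᵀ) (z : Fin d → ℝ) :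
    attn K Q V (gaussianVec m A) z = V.mulVec m + (V * Γ * Kᵀ * Q).mulVec z := by
  classical
  set w : Fin d → ℝ := Q.mulVec z with hw
  set c0 : ℝ := w ⬝ᵥ K.mulVec m with hc0
  set b : Fin d → ℝ := (K * A)ᵀ.mulVec w with hb
  set E : ℝ := ∏ j, Real.exp ((b j)^2/2) with hE
  have hEpos : 0 < E := Finset.prod_pos fun j _ => Real.exp_pos _
  have hφ : Measurable fun x : Fin d → ℝ => m + A.mulVec x :=
    (continuous_const.add (continuous_mulVec A)).measurable
  have hexp_cont : Continuous fun z' : Fin d → ℝ => Real.exp (w ⬝ᵥ K.mulVec z') :=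
    Real.continuous_exp.comp ((continuous_dotProduct w).comp (continuous_mulVec K))
  -- the exponent after the change of variables
  have hexponent : ∀ x : Fin d → ℝ, w ⬝ᵥ K.mulVec (m + A.mulVec x) = c0 + b ⬝ᵥ x := by
    intro x
    rw [Matrix.mulVec_add, dotProduct_add]
    congr 1
    rw [Matrix.mulVec_mulVec, Matrix.dotProduct_mulVec, hb, Matrix.mulVec_transpose]
  -- rewrite the two integrals as integrals over the standard Gaussian
  rw [attn, gaussianVec,
    integral_map hφ.aemeasurable hexp_cont.aestronglyMeasurable,
    integral_map hφ.aemeasurable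
      (f := fun z' => Real.exp (w ⬝ᵥ K.mulVec z') • V.mulVec z')
      (hexp_cont.smul (continuous_mulVec V)).aestronglyMeasurable]
  simp only [hexponent]
  -- denominator
  have hD : ∫ x, Real.exp (c0 + b ⬝ᵥ x) ∂stdGaussian d = Real.exp c0 * E := by
    simp_rw [Real.exp_add]
    rw [integral_const_mul, integral_exp_dot b]
  -- numerator
  set col : Fin d → (Fin d → ℝ) := fun i => fun j => (V * A) j i with hcol
  have hVAsum : ∀ x : Fin d → ℝ, (V * A).mulVec x = ∑ i, x i • col i := by
    intro x
    funext j
    simp only [Matrix.mulVec, dotProduct, Finset.sum_apply, Pi.smul_apply, smul_eq_mul, hcol]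
    exact Finset.sum_congr rfl fun i _ => mul_comm _ _
  have hpt : ∀ x : Fin d → ℝ, Real.exp (c0 + b ⬝ᵥ x) • V.mulVec (m + A.mulVec x)
      = (Real.exp c0 * Real.exp (b ⬝ᵥ x)) • V.mulVec m
        + ∑ i, (Real.exp c0 * (Real.exp (b ⬝ᵥ x) * x i)) • col i := by
    intro x
    rw [Matrix.mulVec_add, Matrix.mulVec_mulVec, hVAsum, Real.exp_add, smul_add,
      Finset.smul_sum]
    congr 1
    exact Finset.sum_congr rfl fun i _ => by rw [smul_smul]; ring_nf
  simp only [hpt]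
  have hI1 : Integrable (fun x => (Real.exp c0 * Real.exp (b ⬝ᵥ x)) • V.mulVec m)
      (stdGaussian d) := ((integrable_exp_dot b).const_mul _).smul_const _
  have hI2 : ∀ i : Fin d, Integrable
      (fun x => (Real.exp c0 * (Real.exp (b ⬝ᵥ x) * x i)) • col i) (stdGaussian d) :=
    fun i => ((integrable_exp_dot_mul b i).const_mul _).smul_const _
  rw [integral_add hI1 (integrable_finset_sum _ fun i _ => hI2 i),
    integral_finset_sum _ (fun i _ => hI2 i)]
  simp_rw [integral_smul_const, integral_const_mul, integral_exp_dot b,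
    integral_exp_dot_mul b]
  have hsum : ∑ i, (Real.exp c0 * (b i * E)) • col i
      = (Real.exp c0 * E) • (V * A).mulVec b := by
    rw [hVAsum b, Finset.smul_sum]
    exact Finset.sum_congr rfl fun i _ => by rw [smul_smul]; congr 1; ring
  rw [hD, hsum, ← smul_add, smul_smul,
    inv_mul_cancel₀ (by positivity : Real.exp c0 * E ≠ 0), one_smul]
  congr 1
  rw [hb, hw, Matrix.mulVec_mulVec, Matrix.mulVec_mulVec, hΓ, Matrix.transpose_mul]
  congr 1
  simp only [Matrix.mul_assoc]
end

section
/- Let $\zeta \sim \chi^2(d)$ (chi-square with $d$ degrees of freedom) and let $c > 0$. Then $\mathbb{E}\left[\frac{\ln(L)^4}{L^{c/\max(1,\zeta)}}\right] \to 0$ as $L \to \infty$. -/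
open MeasureTheory ProbabilityTheory Filter

lemma pdf_half_eq (a : ℝ) {x : ℝ} (hx : 0 ≤ x) :
    gammaPDFReal a (1/2) x = 2 ^ a * Real.exp (-(x/4)) * gammaPDFReal a (1/4) x := by
  rw [gammaPDFReal, gammaPDFReal, if_pos hx, if_pos hx]
  have h1 : ((1:ℝ)/2) ^ a = 2 ^ a * (1/4 : ℝ) ^ a := by
    rw [← Real.mul_rpow (by norm_num) (by norm_num)]
    norm_num
  have h2 : Real.exp (-(1/2 * x)) = Real.exp (-(x/4)) * Real.exp (-(1/4 * x)) := by
    rw [← Real.exp_add]; ring_nf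
  rw [h1, h2]; ring

lemma tail_bound (a : ℝ) (ha : 0 < a) {M : ℝ} (hM : 0 ≤ M) :
    (gammaMeasure a (1/2)) (Set.Ioi M) ≤ ENNReal.ofReal (2 ^ a * Real.exp (-(M/4))) := by
  rw [gammaMeasure, withDensity_apply _ measurableSet_Ioi]
  calc ∫⁻ x in Set.Ioi M, gammaPDF a (1/2) x
      ≤ ∫⁻ x in Set.Ioi M,
          ENNReal.ofReal (2 ^ a * Real.exp (-(M/4))) * gammaPDF a (1/4) x := by
        refine setLIntegral_mono' measurableSet_Ioi fun x hx => ?_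
        have hx0 : (0:ℝ) ≤ x := hM.trans (le_of_lt hx)
        rw [gammaPDF, gammaPDF, ← ENNReal.ofReal_mul (by positivity)]
        apply ENNReal.ofReal_le_ofReal
        rw [pdf_half_eq a hx0]
        have h1 : 0 ≤ gammaPDFReal a (1/4) x := gammaPDFReal_nonneg ha (by norm_num) x
        have h2 : Real.exp (-(x/4)) ≤ Real.exp (-(M/4)) := by
          apply Real.exp_le_exp.2; simp only [Set.mem_Ioi] at hx; linarith
        have h3 : (0:ℝ) ≤ 2 ^ a := by positivity
        exact mul_le_mul_of_nonneg_right (mul_le_mul_of_nonneg_left h2 h3) h1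
    _ ≤ ENNReal.ofReal (2 ^ a * Real.exp (-(M/4))) * ∫⁻ x, gammaPDF a (1/4) x := by
        rw [lintegral_const_mul' _ _ ENNReal.ofReal_ne_top]
        exact mul_le_mul_right (setLIntegral_le_lintegral _ _) _
    _ = ENNReal.ofReal (2 ^ a * Real.exp (-(M/4))) := by
        rw [lintegral_gammaPDF_eq_one ha (by norm_num)]; simp

lemma pow_exp_decay (n : ℕ) {c : ℝ} (hc : 0 < c) :
    Tendsto (fun t : ℝ => t ^ n * Real.exp (-(c * t))) atTop (nhds 0) := by
  have h := ((Real.tendsto_pow_mul_exp_neg_atTop_nhds_zero n).comp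
      (tendsto_id.const_mul_atTop hc)).const_mul ((c ^ n)⁻¹)
  rw [mul_zero] at h
  refine h.congr fun t => ?_
  simp only [Function.comp_apply, id_eq, mul_pow]
  field_simp

lemma bound_tendsto (a c : ℝ) (hc : 0 < c) :
    Tendsto (fun L : ℕ => Real.log L ^ 4 * Real.exp (-(c * Real.sqrt (Real.log L)))
        + Real.log L ^ 4 * ((2:ℝ) ^ a * Real.exp (-((1/4) * Real.sqrt (Real.log L)))))
      atTop (nhds 0) := by
  have hG : Tendsto (fun t : ℝ => t ^ 8 * Real.exp (-(c * t))
      + t ^ 8 * ((2:ℝ) ^ a * Real.exp (-((1/4) * t)))) atTop (nhds 0) := by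
    have hA := pow_exp_decay 8 hc
    have hB := (pow_exp_decay 8 (show (0:ℝ) < 1/4 by norm_num)).const_mul ((2:ℝ) ^ a)
    rw [mul_zero] at hB
    have h := hA.add hB
    rw [add_zero] at h
    refine h.congr fun t => ?_
    ring
  have hlog : Tendsto (fun L : ℕ => Real.log L) atTop atTop :=
    Real.tendsto_log_atTop.comp tendsto_natCast_atTop_atTop
  have hsqrt : Tendsto Real.sqrt atTop atTop :=
    (tendsto_rpow_atTop (by norm_num : (0:ℝ) < 1/2)).congr
      fun x => (Real.sqrt_eq_rpow x).symm
  refine (hG.comp (hsqrt.comp hlog)).congr' ?_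
  filter_upwards [hlog.eventually_ge_atTop 0] with L hL
  have h8 : Real.sqrt (Real.log L) ^ 8 = Real.log L ^ 4 := by
    rw [show (8:ℕ) = 2*4 from rfl, pow_mul, Real.sq_sqrt hL]
  simp only [Function.comp_apply, h8]

/-- If `ζ ∼ χ²(d)` (chi-square with `d` degrees of freedom, i.e. the Gamma distribution with
shape `d/2` and rate `1/2`) and `c > 0`, then `E[ln(L)⁴ / L^{c / max(1, ζ)}] → 0` as
`L → ∞`. -/
theorem chi_square_polylog_decay (d : ℕ) (hd : 0 < d) (c : ℝ) (hc : 0 < c) :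
    Tendsto
      (fun L : ℕ =>
        ∫ x, Real.log L ^ 4 / (L : ℝ) ^ (c / max 1 x) ∂(gammaMeasure (d / 2 : ℝ) (1 / 2)))
      atTop (nhds 0) := by
  have ha : (0:ℝ) < (d / 2 : ℝ) := by
    have : (0:ℝ) < d := by exact_mod_cast hd
    linarith
  haveI : IsProbabilityMeasure (gammaMeasure (d / 2 : ℝ) (1/2)) :=
    isProbabilityMeasure_gammaMeasure ha (by norm_num)
  set μ := gammaMeasure (d / 2 : ℝ) (1/2) with hμ
  refine tendsto_of_tendsto_of_tendsto_of_le_of_le' tendsto_const_nhds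
    (bound_tendsto (d / 2 : ℝ) c hc) ?_ ?_
  · filter_upwards [eventually_ge_atTop 1] with L hL
    have hL1 : (1:ℝ) ≤ (L:ℝ) := by exact_mod_cast hL
    have hlogL : 0 ≤ Real.log L := Real.log_nonneg hL1
    have hL0 : (0:ℝ) < (L:ℝ) := by linarith
    exact integral_nonneg fun x => by positivity
  · filter_upwards [eventually_ge_atTop 3] with L hL
    have hL3 : (3:ℝ) ≤ (L:ℝ) := by exact_mod_cast hL
    have hL0 : (0:ℝ) < (L:ℝ) := by linarith
    have hL1 : (1:ℝ) ≤ (L:ℝ) := by linarith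
    have hlog1 : (1:ℝ) ≤ Real.log L := by
      rw [Real.le_log_iff_exp_le hL0]
      calc Real.exp 1 ≤ 2.7182818286 := Real.exp_one_lt_d9.le
        _ ≤ (L:ℝ) := by linarith
    have hlog0 : (0:ℝ) ≤ Real.log L := by linarith
    set M := Real.sqrt (Real.log L) with hMdef
    have hM1 : (1:ℝ) ≤ M := by
      rw [show (1:ℝ) = Real.sqrt 1 by simp]
      exact Real.sqrt_le_sqrt hlog1
    have hM0 : (0:ℝ) ≤ M := by linarith
    set A := Real.log L ^ 4 * Real.exp (-(c * M)) with hAdef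
    set B := Real.log L ^ 4 with hBdef
    have hA0 : 0 ≤ A := by positivity
    have hB0 : 0 ≤ B := by positivity
    set f := fun x : ℝ => Real.log L ^ 4 / (L : ℝ) ^ (c / max 1 x) with hfdef
    set g := fun x : ℝ => (Set.Iic M).indicator (fun _ => A) x
        + (Set.Ioi M).indicator (fun _ => B) x with hgdef
    have hcont : Continuous f := by
      have h1 : Continuous (fun x : ℝ => c / max 1 x) :=
        continuous_const.div (continuous_const.max continuous_id)
          (fun x => by positivity)
      have h2 : Continuous (fun x : ℝ => (L:ℝ) ^ (c / max 1 x)) :=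
        continuous_const.rpow h1 (fun x => Or.inl hL0.ne')
      exact continuous_const.div h2
        (fun x => (Real.rpow_pos_of_pos hL0 _).ne')
    have hfB : ∀ x : ℝ, f x ≤ B := by
      intro x
      have hmaxpos : (0:ℝ) < max 1 x := lt_of_lt_of_le one_pos (le_max_left 1 x)
      have hexp0 : 0 ≤ c / max 1 x := by positivity
      exact div_le_self hB0 (Real.one_le_rpow hL1 hexp0)
    have hf0 : ∀ x : ℝ, 0 ≤ f x := fun x => by positivity
    have hgA_int : Integrable ((Set.Iic M).indicator (fun _ => A)) μ :=
      (integrable_const A).indicator measurableSet_Iic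
    have hgB_int : Integrable ((Set.Ioi M).indicator (fun _ => B)) μ :=
      (integrable_const B).indicator measurableSet_Ioi
    have hg_int : Integrable g μ := hgA_int.add hgB_int
    have hf_int : Integrable f μ := by
      refine (integrable_const B).mono' hcont.aestronglyMeasurable
        (ae_of_all _ fun x => ?_)
      rw [Real.norm_eq_abs, abs_of_nonneg (hf0 x)]
      exact hfB x
    have hfg : ∀ x : ℝ, f x ≤ g x := by
      intro x
      by_cases hx : x ≤ M
      · have e1 : (Set.Iic M).indicator (fun _ => A) x = A :=
          Set.indicator_of_mem (Set.mem_Iic.mpr hx) _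
        have e2 : (Set.Ioi M).indicator (fun _ => B) x = 0 :=
          Set.indicator_of_notMem (by simpa using hx.not_gt) _
        rw [hgdef]
        simp only
        rw [e1, e2, add_zero]
        have hmaxpos : (0:ℝ) < max 1 x := lt_of_lt_of_le one_pos (le_max_left 1 x)
        have hmaxM : max 1 x ≤ M := max_le hM1 hx
        have key : c * M ≤ Real.log L * (c / max 1 x) := by
          have step1 : c / M ≤ c / max 1 x :=
            div_le_div_of_nonneg_left hc.le hmaxpos hmaxM
          have step2 : Real.log L * (c / M) ≤ Real.log L * (c / max 1 x) :=
            mul_le_mul_of_nonneg_left step1 hlog0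
          have step3 : Real.log L * (c / M) = c * M := by
            rw [show Real.log L * (c / M) = c * (Real.log L / M) by ring, hMdef,
              Real.div_sqrt]
          linarith
        have hrp : Real.exp (c * M) ≤ (L:ℝ) ^ (c / max 1 x) := by
          rw [Real.rpow_def_of_pos hL0]
          exact Real.exp_le_exp.2 key
        calc f x ≤ Real.log L ^ 4 / Real.exp (c * M) :=
              div_le_div_of_nonneg_left (by positivity) (Real.exp_pos _) hrp
          _ = A := by rw [hAdef, Real.exp_neg, div_eq_mul_inv]
      · push_neg at hx
        have e1 : (Set.Iic M).indicator (fun _ => A) x = 0 :=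
          Set.indicator_of_notMem (by simpa using hx.not_ge) _
        have e2 : (Set.Ioi M).indicator (fun _ => B) x = B :=
          Set.indicator_of_mem (Set.mem_Ioi.mpr hx) _
        rw [hgdef]
        simp only
        rw [e1, e2, zero_add]
        exact hfB x
    have htail : (μ (Set.Ioi M)).toReal ≤ 2 ^ (d / 2 : ℝ) * Real.exp (-(M/4)) :=
      ENNReal.toReal_le_of_le_ofReal (by positivity) (tail_bound _ ha hM0)
    have hIict : (μ (Set.Iic M)).toReal ≤ 1 := by
      refine ENNReal.toReal_le_of_le_ofReal zero_le_one ?_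
      simpa using prob_le_one (μ := μ) (s := Set.Iic M)
    calc ∫ x, f x ∂μ ≤ ∫ x, g x ∂μ := integral_mono hf_int hg_int hfg
      _ = (∫ x, (Set.Iic M).indicator (fun _ => A) x ∂μ)
          + ∫ x, (Set.Ioi M).indicator (fun _ => B) x ∂μ :=
            integral_add hgA_int hgB_int
      _ = (μ (Set.Iic M)).toReal * A + (μ (Set.Ioi M)).toReal * B := by
            rw [integral_indicator_const A measurableSet_Iic,
              integral_indicator_const B measurableSet_Ioi, smul_eq_mul, smul_eq_mul]
            rfl
      _ ≤ 1 * A + (2 ^ (d / 2 : ℝ) * Real.exp (-(M/4))) * B := by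
            gcongr
      _ = Real.log L ^ 4 * Real.exp (-(c * M))
          + Real.log L ^ 4 * ((2:ℝ) ^ (d / 2 : ℝ) * Real.exp (-((1/4) * M))) := by
            rw [show -(M/4) = -((1/4) * M) by ring]
            ring
end
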